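/- Let Ω ⊂ ℝ^d be convex with diameter D > 0, ε > 0, and let σ: Ω → ℝ be concave and continuous. Suppose there exists x* ∈ Ω with σ(x*) ≥ ε. Let S := {x ∈ Ω : σ(x) ≥ 0}. Then for every x ∈ Ω with σ(x) < 0, we have σ(x) ≤ -(ε/D)·dist(x, S). -/

import Mathlib

theorem stmt12 {d : ℕ} (Ω : Set (EuclideanSpace ℝ (Fin d)))
    (hconv : Convex ℝ Ω) (hD : 0 < Metric.diam Ω)
    (σ : EuclideanSpace ℝ (Fin d) → ℝ)
    (hconc : ConcaveOn ℝ Ω σ) (hcont : ContinuousOn σ Ω)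
    (ε : ℝ) (hε : 0 < ε)
    (xstar : EuclideanSpace ℝ (Fin d)) (hxstar : xstar ∈ Ω) (hσx : ε ≤ σ xstar) :
    ∀ x ∈ Ω, σ x < 0 →
      σ x ≤ -(ε / Metric.diam Ω) * Metric.infDist x {s ∈ Ω | 0 ≤ σ s} := by
  intro x hx hσxneg
  -- Ω is bounded (otherwise diam = 0)
  have hbd : Bornology.IsBounded Ω := by
    by_contra h
    rw [Metric.diam_eq_zero_of_unbounded h] at hD
    exact lt_irrefl _ hD
  -- the segment map
  set g : ℝ → EuclideanSpace ℝ (Fin d) := fun t => (1 - t) • x + t • xstar with hg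
  have hgcont : Continuous g := by
    apply Continuous.add
    · exact (continuous_const.sub continuous_id).smul continuous_const
    · exact continuous_id.smul continuous_const
  have hgmem : ∀ t ∈ Set.Icc (0:ℝ) 1, g t ∈ Ω := by
    intro t ht
    exact hconv hx hxstar (by linarith [ht.2]) ht.1 (by ring)
  have hfcont : ContinuousOn (σ ∘ g) (Set.Icc 0 1) :=
    hcont.comp hgcont.continuousOn hgmem
  have hg0 : g 0 = x := by simp [hg]
  have hg1 : g 1 = xstar := by simp [hg]
  -- IVT
  have hivt := intermediate_value_Icc (zero_le_one) hfcont
  have h0mem : (0:ℝ) ∈ Set.Icc ((σ ∘ g) 0) ((σ ∘ g) 1) := by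
    constructor
    · simp [hg0]; linarith
    · simp [hg1]; linarith
  obtain ⟨t, ht, hft⟩ := hivt h0mem
  have ht0 : 0 ≤ t := ht.1
  have ht1 : t ≤ 1 := ht.2
  set y := g t with hy
  have hyΩ : y ∈ Ω := hgmem t ht
  have hσy : σ y = 0 := hft
  -- concavity
  have hconcle : (1 - t) * σ x + t * σ xstar ≤ σ y := by
    have h : (1 - t) • σ x + t • σ xstar ≤ σ ((1 - t) • x + t • xstar) :=
      hconc.2 hx hxstar (by linarith) ht0 (by ring)
    simpa [smul_eq_mul, hy, hg] using h
  have hkey : σ x ≤ -(t * ε) := by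
    nlinarith [hconcle, hσy, mul_le_mul_of_nonneg_left hσx ht0]
  -- distance bound
  have hxy : x - y = t • (x - xstar) := by
    simp only [hy, hg]
    module
  have hdistxy : dist x y = t * dist x xstar := by
    rw [dist_eq_norm, hxy, norm_smul, Real.norm_eq_abs, abs_of_nonneg ht0,
      ← dist_eq_norm]
  have hdd : dist x xstar ≤ Metric.diam Ω := Metric.dist_le_diam_of_mem hbd hx hxstar
  have hyS : y ∈ {s ∈ Ω | 0 ≤ σ s} := ⟨hyΩ, le_of_eq hσy.symm⟩
  have hinf : Metric.infDist x {s ∈ Ω | 0 ≤ σ s} ≤ t * Metric.diam Ω := by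
    calc Metric.infDist x {s ∈ Ω | 0 ≤ σ s} ≤ dist x y :=
          Metric.infDist_le_dist_of_mem hyS
      _ = t * dist x xstar := hdistxy
      _ ≤ t * Metric.diam Ω := mul_le_mul_of_nonneg_left hdd ht0
  have h1 : (ε / Metric.diam Ω) * Metric.infDist x {s ∈ Ω | 0 ≤ σ s}
      ≤ (ε / Metric.diam Ω) * (t * Metric.diam Ω) :=
    mul_le_mul_of_nonneg_left hinf (by positivity)
  have h2 : (ε / Metric.diam Ω) * (t * Metric.diam Ω) = t * ε := by
    field_simp
  linarith
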